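/- arXiv:1502.07642 — 9 statements merged into one kernel-verified Lean document; each statement's English description precedes it below -/
import Mathlib

section
/- For N ≥ 1, 0 ≤ n ≤ N and real x, ∑_{ℓ=1}^∞ M(n,ℓ) x^{ℓ−1}/(ℓ−1)! = (sinh x)^{n−1} (cosh x)^{N−n−1} (n (cosh x)^2 + (N−n)(sinh x)^2), i.e., the derivative in x of (sinh x)^n (cosh x)^{N−n}. -/
open Real Finset



lemma cardA (N n L : ℕ) :
    ((2:ℝ))^N * (Fintype.card {f : Fin L → Fin N //
        ∀ k : Fin N, if (k : ℕ) < n then Odd (Fintype.card {i : Fin L // f i = k})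
          else Even (Fintype.card {i : Fin L // f i = k})} : ℝ)
    = ∑ S ∈ (Finset.univ : Finset (Fin N)).powerset,
        (-1:ℝ) ^ (S.filter (fun k : Fin N => (k:ℕ) < n)).card * ((N:ℝ) - 2 * S.card) ^ L := by
  classical
  -- rewrite each (N - 2|S|) as a sum of ±1
  have hc : ∀ S : Finset (Fin N), ((N:ℝ) - 2 * S.card)
      = ∑ a : Fin N, (if a ∈ S then (-1:ℝ) else 1) := by
    intro S
    rw [Finset.sum_ite, Finset.sum_const, Finset.sum_const]
    simp only [Finset.filter_mem_eq_inter, Finset.univ_inter, nsmul_eq_mul, mul_one, mul_neg]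
    have h1 : (Finset.univ.filter (fun a => a ∉ S)).card = N - S.card := by
      rw [Finset.filter_not]
      simp [Finset.card_sdiff_of_subset (Finset.subset_univ S)]
    rw [h1, Nat.cast_sub (by simpa using Finset.card_le_univ S)]
    ring
  symm
  calc ∑ S ∈ (Finset.univ : Finset (Fin N)).powerset,
        (-1:ℝ) ^ (S.filter (fun k : Fin N => (k:ℕ) < n)).card * ((N:ℝ) - 2 * S.card) ^ L
      = ∑ S ∈ (Finset.univ : Finset (Fin N)).powerset, ∑ f : Fin L → Fin N,
          (-1:ℝ) ^ (S.filter (fun k : Fin N => (k:ℕ) < n)).card *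
            ∏ i : Fin L, (if f i ∈ S then (-1:ℝ) else 1) := by
        refine Finset.sum_congr rfl fun S _ => ?_
        rw [hc S, ← Finset.mul_sum]
        congr 1
        rw [show ((∑ a : Fin N, if a ∈ S then (-1:ℝ) else 1) ^ L)
            = ∏ _i : Fin L, (∑ a : Fin N, if a ∈ S then (-1:ℝ) else 1) by
          rw [Finset.prod_const, Finset.card_univ, Fintype.card_fin]]
        rw [Finset.prod_univ_sum (fun _ => (Finset.univ : Finset (Fin N)))
          (fun _ a => if a ∈ S then (-1:ℝ) else 1)]
        rw [Fintype.piFinset_univ]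
    _ = ∑ f : Fin L → Fin N, ∑ S ∈ (Finset.univ : Finset (Fin N)).powerset,
          (-1:ℝ) ^ (S.filter (fun k : Fin N => (k:ℕ) < n)).card *
            ∏ i : Fin L, (if f i ∈ S then (-1:ℝ) else 1) := Finset.sum_comm
    _ = ((2:ℝ))^N * (Fintype.card {f : Fin L → Fin N //
        ∀ k : Fin N, if (k : ℕ) < n then Odd (Fintype.card {i : Fin L // f i = k})
          else Even (Fintype.card {i : Fin L // f i = k})} : ℝ) := by
        have key : ∀ f : Fin L → Fin N,
            ∑ S ∈ (Finset.univ : Finset (Fin N)).powerset,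
              (-1:ℝ) ^ (S.filter (fun k : Fin N => (k:ℕ) < n)).card *
                ∏ i : Fin L, (if f i ∈ S then (-1:ℝ) else 1)
            = if (∀ k : Fin N, if (k : ℕ) < n then Odd (Fintype.card {i : Fin L // f i = k})
                else Even (Fintype.card {i : Fin L // f i = k})) then (2:ℝ)^N else 0 := by
          intro f
          set m : Fin N → ℕ := fun k => Fintype.card {i : Fin L // f i = k} with hm
          have hfib : ∀ S : Finset (Fin N), (∏ i : Fin L, (if f i ∈ S then (-1:ℝ) else 1))
              = ∏ k ∈ S, (-1:ℝ) ^ (m k) := by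
            intro S
            rw [← Finset.prod_fiberwise_of_maps_to' (fun i _ => Finset.mem_univ (f i))
              (fun k => if k ∈ S then (-1:ℝ) else 1)]
            have : ∀ k : Fin N, (Finset.univ.filter (fun i => f i = k)).card = m k := by
              intro k; rw [hm]; simp [Fintype.card_subtype]
            calc ∏ k : Fin N, ∏ i ∈ Finset.univ.filter (fun i => f i = k),
                  (if k ∈ S then (-1:ℝ) else 1)
                = ∏ k : Fin N, (if k ∈ S then (-1:ℝ) else 1) ^ (m k) := by
                  refine Finset.prod_congr rfl fun k _ => ?_
                  rw [Finset.prod_const, this k]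
              _ = ∏ k ∈ S, (-1:ℝ) ^ (m k) := by
                  simp_rw [ite_pow, one_pow]
                  rw [Finset.prod_ite_mem, Finset.univ_inter]
          simp_rw [hfib]
          have hsgn : ∀ S : Finset (Fin N),
              (-1:ℝ) ^ (S.filter (fun k : Fin N => (k:ℕ) < n)).card
              = ∏ k ∈ S, (if (k:ℕ) < n then (-1:ℝ) else 1) := by
            intro S
            rw [← Finset.prod_const, Finset.prod_filter]
          simp_rw [hsgn, ← Finset.prod_mul_distrib]
          set t : Fin N → ℝ := fun k => (if (k:ℕ) < n then (-1:ℝ) else 1) * (-1:ℝ) ^ (m k) with ht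
          have hpa := Finset.prod_add t (fun _ => (1:ℝ)) (Finset.univ : Finset (Fin N))
          simp only [Finset.prod_const_one, mul_one] at hpa
          rw [← hpa]
          by_cases hP : ∀ k : Fin N, if (k : ℕ) < n then Odd (m k) else Even (m k)
          · rw [if_pos hP]
            have : ∀ k : Fin N, t k + 1 = 2 := by
              intro k
              have := hP k
              simp only [ht]
              by_cases hk : (k:ℕ) < n
              · rw [if_pos hk] at this ⊢
                rw [Odd.neg_one_pow this]; norm_num
              · rw [if_neg hk] at this ⊢
                rw [Even.neg_one_pow this]; norm_num
            rw [Finset.prod_congr rfl (fun k _ => this k), Finset.prod_const]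
            simp
          · rw [if_neg hP]
            push_neg at hP
            obtain ⟨k, hk⟩ := hP
            refine Finset.prod_eq_zero (Finset.mem_univ k) ?_
            simp only [ht]
            by_cases hkn : (k:ℕ) < n
            · rw [if_pos hkn] at hk ⊢
              rw [Nat.not_odd_iff_even] at hk
              rw [Even.neg_one_pow hk]; norm_num
            · rw [if_neg hkn] at hk ⊢
              rw [Nat.not_even_iff_odd] at hk
              rw [Odd.neg_one_pow hk]; norm_num
        simp_rw [key]
        rw [Finset.sum_ite, Finset.sum_const, Finset.sum_const_zero, add_zero,
          nsmul_eq_mul, Fintype.card_subtype]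
        ring

lemma card_filter_lt (N n : ℕ) (hn : n ≤ N) :
    ((Finset.univ : Finset (Fin N)).filter (fun k : Fin N => (k:ℕ) < n)).card = n := by
  rw [Finset.card_filter, Fin.sum_univ_eq_sum_range (fun i => if i < n then 1 else 0),
    ← Finset.card_filter]
  have : (Finset.range N).filter (fun i => i < n) = Finset.range n := by
    ext i; simp; omega
  rw [this, Finset.card_range]

lemma prodB (N n : ℕ) (hn : n ≤ N) (x : ℝ) :
    Real.sinh x ^ n * Real.cosh x ^ (N - n)
      = (2:ℝ)⁻¹ ^ N * ∑ S ∈ (Finset.univ : Finset (Fin N)).powerset,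
          (-1:ℝ) ^ (S.filter (fun k : Fin N => (k:ℕ) < n)).card *
            Real.exp (((N:ℝ) - 2 * S.card) * x) := by
  classical
  have h1 : Real.sinh x ^ n * Real.cosh x ^ (N - n)
      = ∏ k : Fin N, (((-1:ℝ)^(if (k:ℕ) < n then 1 else 0) * Real.exp (-x) + Real.exp x) * (2:ℝ)⁻¹) := by
    have hs : ∀ k : Fin N, (((-1:ℝ)^(if (k:ℕ) < n then 1 else 0) * Real.exp (-x) + Real.exp x) * (2:ℝ)⁻¹)
        = if (k:ℕ) < n then Real.sinh x else Real.cosh x := by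
      intro k
      by_cases hk : (k:ℕ) < n
      · rw [if_pos hk, if_pos hk, Real.sinh_eq]; ring
      · rw [if_neg hk, if_neg hk, Real.cosh_eq]; ring
    rw [Finset.prod_congr rfl (fun k _ => hs k), Finset.prod_ite, Finset.prod_const,
      Finset.prod_const, card_filter_lt N n hn]
    congr 2
    rw [Finset.filter_not, Finset.card_sdiff_of_subset (Finset.filter_subset _ _), card_filter_lt N n hn]
    simp
  rw [h1, Finset.prod_mul_distrib, Finset.prod_const, Finset.card_univ, Fintype.card_fin,
    mul_comm, Finset.prod_add]
  congr 1
  refine Finset.sum_congr rfl fun S hS => ?_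
  rw [Finset.prod_mul_distrib, Finset.prod_const, Finset.prod_const]
  have hsgn : (∏ k ∈ S, (-1:ℝ)^(if (k:ℕ) < n then 1 else 0))
      = (-1:ℝ) ^ (S.filter (fun k : Fin N => (k:ℕ) < n)).card := by
    rw [Finset.prod_pow_eq_pow_sum, ← Finset.card_filter]
  rw [hsgn, mul_assoc]
  congr 1
  have hcard : (Finset.univ \ S).card = N - S.card := by
    rw [Finset.card_sdiff_of_subset (Finset.subset_univ S)]; simp
  rw [hcard, ← Real.exp_nat_mul, ← Real.exp_nat_mul, ← Real.exp_add]
  congr 1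
  rw [Nat.cast_sub (by simpa using Finset.card_le_univ S)]
  ring

lemma derivEq (N n : ℕ) (hn : n ≤ N) (x : ℝ) :
    ((n:ℝ) * Real.sinh x ^ (n-1) * Real.cosh x) * Real.cosh x ^ (N-n)
      + Real.sinh x ^ n * (((N-n : ℕ):ℝ) * Real.cosh x ^ (N-n-1) * Real.sinh x)
    = (2:ℝ)⁻¹ ^ N * ∑ S ∈ (Finset.univ : Finset (Fin N)).powerset,
        (-1:ℝ) ^ (S.filter (fun k : Fin N => (k:ℕ) < n)).card *
          (((N:ℝ) - 2 * S.card) * Real.exp (((N:ℝ) - 2 * S.card) * x)) := by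
  classical
  have h1 : HasDerivAt (fun y => Real.sinh y ^ n * Real.cosh y ^ (N-n))
      (((n:ℝ) * Real.sinh x ^ (n-1) * Real.cosh x) * Real.cosh x ^ (N-n)
        + Real.sinh x ^ n * (((N-n : ℕ):ℝ) * Real.cosh x ^ (N-n-1) * Real.sinh x)) x :=
    ((Real.hasDerivAt_sinh x).pow n).mul ((Real.hasDerivAt_cosh x).pow (N-n))
  have h2 : HasDerivAt (fun y => (2:ℝ)⁻¹ ^ N *
        ∑ S ∈ (Finset.univ : Finset (Fin N)).powerset,
          (-1:ℝ) ^ (S.filter (fun k : Fin N => (k:ℕ) < n)).card *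
            Real.exp (((N:ℝ) - 2 * S.card) * y))
      ((2:ℝ)⁻¹ ^ N * ∑ S ∈ (Finset.univ : Finset (Fin N)).powerset,
          (-1:ℝ) ^ (S.filter (fun k : Fin N => (k:ℕ) < n)).card *
            (((N:ℝ) - 2 * S.card) * Real.exp (((N:ℝ) - 2 * S.card) * x))) x := by
    refine HasDerivAt.const_mul _ (HasDerivAt.fun_sum fun S _ => ?_)
    have h := (((hasDerivAt_id x).const_mul ((N:ℝ) - 2 * S.card)).exp).const_mul
      ((-1:ℝ) ^ (S.filter (fun k : Fin N => (k:ℕ) < n)).card)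
    convert h using 1
    · rfl
    · rfl
    simp only [id_eq]
    ring
  have hfun : (fun y => Real.sinh y ^ n * Real.cosh y ^ (N-n))
      = (fun y => (2:ℝ)⁻¹ ^ N * ∑ S ∈ (Finset.univ : Finset (Fin N)).powerset,
          (-1:ℝ) ^ (S.filter (fun k : Fin N => (k:ℕ) < n)).card *
            Real.exp (((N:ℝ) - 2 * S.card) * y)) := funext fun y => prodB N n hn y
  rw [hfun] at h1
  exact h1.unique h2

lemma algE (N n : ℕ) (hN : 1 ≤ N) (hn : n ≤ N) (x : ℝ) :
    ((n:ℝ) * Real.sinh x ^ (n-1) * Real.cosh x) * Real.cosh x ^ (N-n)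
      + Real.sinh x ^ n * (((N-n : ℕ):ℝ) * Real.cosh x ^ (N-n-1) * Real.sinh x)
    = (Real.sinh x) ^ ((n : ℤ) - 1) * (Real.cosh x) ^ ((N : ℤ) - (n : ℤ) - 1)
        * ((n : ℝ) * (Real.cosh x) ^ 2 + ((N : ℝ) - (n : ℝ)) * (Real.sinh x) ^ 2) := by
  obtain ⟨d, rfl⟩ := Nat.exists_eq_add_of_le hn
  have hc : Real.cosh x ≠ 0 := (Real.cosh_pos x).ne'
  have hNn : n + d - n = d := by omega
  rw [hNn]
  rcases Nat.eq_zero_or_pos n with rfl | hnpos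
  · -- n = 0
    simp only [Nat.cast_zero, zero_add, CharP.cast_eq_zero, zero_mul, zero_sub, pow_zero, one_mul,
      zero_mul, zero_add]
    by_cases hs : Real.sinh x = 0
    · simp [hs, zero_zpow]
    · have h1d : 1 ≤ d := by omega
      obtain ⟨e, rfl⟩ := Nat.exists_eq_add_of_le h1d
      have : ((1 + e : ℕ) : ℤ) - 0 - 1 = (e : ℤ) := by push_cast; ring
      rw [this, zpow_natCast, zpow_neg_one]
      have : (1 + e) - 1 = e := by omega
      rw [this]
      field_simp
      ring
  · obtain ⟨m, rfl⟩ := Nat.exists_eq_add_of_le hnpos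
    have h1 : ((1 + m : ℕ) : ℤ) - 1 = (m : ℤ) := by push_cast; ring
    have h2 : (1 + m) - 1 = m := by omega
    rw [h2, h1, zpow_natCast]
    rcases Nat.eq_zero_or_pos d with rfl | hdpos
    · have : (((1+m) + 0 : ℕ) : ℤ) - ((1+m : ℕ) : ℤ) - 1 = -1 := by push_cast; ring
      rw [this, zpow_neg_one]
      simp only [Nat.cast_zero, pow_zero, mul_one, zero_mul]
      have hNc : (((1+m)+0 : ℕ) : ℝ) - ((1+m : ℕ) : ℝ) = 0 := by push_cast; ring
      rw [hNc]
      field_simp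
      ring
    · obtain ⟨e, rfl⟩ := Nat.exists_eq_add_of_le hdpos
      have : (((1+m) + (1+e) : ℕ) : ℤ) - ((1+m : ℕ) : ℤ) - 1 = (e : ℤ) := by push_cast; ring
      rw [this, zpow_natCast]
      have h3 : (1+e) - 1 = e := by omega
      rw [h3]
      have hNc : ((((1+m))+(1+e) : ℕ) : ℝ) - ((1+m : ℕ) : ℝ) = ((1+e : ℕ) : ℝ) := by
        push_cast; ring
      rw [hNc]
      push_cast
      ring

/-- Derivative version of the walk generating function: with `M(n,ℓ)` the number of
sequences `(a_1,…,a_ℓ) ∈ {1,…,N}^ℓ` in which each of `1,…,n` occurs an odd number of times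
and each of `n+1,…,N` an even number of times, one has
`∑_{ℓ≥1} M(n,ℓ) x^{ℓ-1}/(ℓ-1)! = (sinh x)^{n-1} (cosh x)^{N-n-1} (n cosh²x + (N-n) sinh²x)`
(integer exponents). -/
theorem stmt1 (N n : ℕ) (hN : 1 ≤ N) (hn : n ≤ N) (x : ℝ) :
    ∑' ℓ : ℕ,
      ((Fintype.card {f : Fin (ℓ + 1) → Fin N //
          ∀ k : Fin N, if (k : ℕ) < n then Odd (Fintype.card {i : Fin (ℓ + 1) // f i = k})
            else Even (Fintype.card {i : Fin (ℓ + 1) // f i = k})} : ℝ)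
        * x ^ ℓ / (Nat.factorial ℓ))
      = (Real.sinh x) ^ ((n : ℤ) - 1) * (Real.cosh x) ^ ((N : ℤ) - (n : ℤ) - 1)
        * ((n : ℝ) * (Real.cosh x) ^ 2 + ((N : ℝ) - (n : ℝ)) * (Real.sinh x) ^ 2) := by
  classical
  have hterm : ∀ ℓ : ℕ,
      ((Fintype.card {f : Fin (ℓ + 1) → Fin N //
          ∀ k : Fin N, if (k : ℕ) < n then Odd (Fintype.card {i : Fin (ℓ + 1) // f i = k})
            else Even (Fintype.card {i : Fin (ℓ + 1) // f i = k})} : ℝ)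
        * x ^ ℓ / (Nat.factorial ℓ))
      = ∑ S ∈ (Finset.univ : Finset (Fin N)).powerset,
          ((2:ℝ)⁻¹ ^ N * (-1:ℝ) ^ (S.filter (fun k : Fin N => (k:ℕ) < n)).card
              * ((N:ℝ) - 2 * S.card))
            * ((((N:ℝ) - 2 * S.card) * x) ^ ℓ / (Nat.factorial ℓ)) := by
    intro ℓ
    have hcard : (Fintype.card {f : Fin (ℓ + 1) → Fin N //
          ∀ k : Fin N, if (k : ℕ) < n then Odd (Fintype.card {i : Fin (ℓ + 1) // f i = k})
            else Even (Fintype.card {i : Fin (ℓ + 1) // f i = k})} : ℝ)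
        = (2:ℝ)⁻¹ ^ N * ∑ S ∈ (Finset.univ : Finset (Fin N)).powerset,
            (-1:ℝ) ^ (S.filter (fun k : Fin N => (k:ℕ) < n)).card
              * ((N:ℝ) - 2 * S.card) ^ (ℓ + 1) := by
      rw [← cardA N n (ℓ+1), inv_pow, inv_mul_cancel_left₀ (by positivity)]
    rw [hcard, Finset.mul_sum, Finset.sum_mul, Finset.sum_div]
    refine Finset.sum_congr rfl fun S _ => ?_
    rw [pow_succ, mul_pow]
    ring
  rw [tsum_congr hterm,
    Summable.tsum_finsetSum (fun S _ => ((Real.summable_pow_div_factorial _).mul_left _))]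
  have hexp : ∀ S : Finset (Fin N),
      (∑' ℓ : ℕ, ((2:ℝ)⁻¹ ^ N * (-1:ℝ) ^ (S.filter (fun k : Fin N => (k:ℕ) < n)).card
          * ((N:ℝ) - 2 * S.card))
        * ((((N:ℝ) - 2 * S.card) * x) ^ ℓ / (Nat.factorial ℓ)))
      = ((2:ℝ)⁻¹ ^ N * (-1:ℝ) ^ (S.filter (fun k : Fin N => (k:ℕ) < n)).card
          * ((N:ℝ) - 2 * S.card)) * Real.exp (((N:ℝ) - 2 * S.card) * x) := by
    intro S
    rw [tsum_mul_left]
    congr 1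
    rw [Real.exp_eq_exp_ℝ, NormedSpace.exp_eq_tsum_div]
  rw [Finset.sum_congr rfl (fun S _ => hexp S)]
  rw [← algE N n hN hn x, derivEq N n hn x, Finset.mul_sum]
  refine Finset.sum_congr rfl fun S _ => ?_
  ring
end

section
/- Suppose N ≥ 7 and s ≥ 1 is a real number. Define g(y,s) = (sinh y)^s (cosh y)^{N−s} for y > 0. Then for every fixed y > 0, the partial derivative ∂g/∂y(y,s) = (sinh y)^{−1}(cosh y)^{N−1}(tanh y)^s (s + N (sinh y)^2) is a decreasing function of s on s ∈ [1, N]. -/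
open Real Set

lemma pade {v : ℝ} (hv : 0 ≤ v) : 2 * v / (2 + v) ≤ Real.log (1 + v) := by
  have key : MonotoneOn (fun v : ℝ => Real.log (1 + v) + 4 / (2 + v)) (Ici 0) := by
    apply monotoneOn_of_deriv_nonneg (convex_Ici 0)
    · apply ContinuousOn.add
      · exact (continuousOn_const.add continuousOn_id).log (fun x hx => by
          have : (0:ℝ) ≤ x := hx; show (1:ℝ) + x ≠ 0; positivity)
      · exact continuousOn_const.div (continuousOn_const.add continuousOn_id)
          (fun x hx => by have : (0:ℝ) ≤ x := hx; positivity)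
    · intro x hx
      rw [interior_Ici] at hx
      have hx' : (0:ℝ) < x := hx
      apply DifferentiableAt.differentiableWithinAt
      apply DifferentiableAt.add
      · exact ((differentiableAt_const (1:ℝ)).add differentiableAt_id).log (by show (1:ℝ) + x ≠ 0; positivity)
      · exact (differentiableAt_const (4:ℝ)).div
          ((differentiableAt_const (2:ℝ)).add differentiableAt_id) (by positivity)
    · intro x hx
      rw [interior_Ici] at hx
      have hx' : (0:ℝ) < x := hx
      have h1 : HasDerivAt (fun v : ℝ => Real.log (1 + v) + 4 / (2 + v))
          (1 / (1 + x) + (0 * (2 + x) - 4 * 1) / (2 + x) ^ 2) x := by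
        apply HasDerivAt.add
        · simpa using (HasDerivAt.log ((hasDerivAt_id x).const_add 1) (by positivity))
        · exact (hasDerivAt_const x 4).div ((hasDerivAt_id x).const_add 2) (by positivity)
      rw [h1.deriv]
      rw [div_add_div _ _ (by positivity) (by positivity)]
      apply div_nonneg _ (by positivity)
      nlinarith
  have h0 := key self_mem_Ici hv hv
  simp only [add_zero, Real.log_one, zero_add] at h0
  have h2 : (0:ℝ) < 2 + v := by linarith
  have h3 : 2 - 4 / (2 + v) ≤ Real.log (1 + v) := by linarith
  have h4 := mul_le_mul_of_nonneg_right h3 h2.le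
  have h5 : (2 - 4 / (2 + v)) * (2 + v) = 2 * v := by field_simp; ring
  rw [div_le_iff₀ h2]
  linarith

/-- For `N ≥ 7`, `y > 0` and `s ∈ [1,N]`, the partial derivative in `y` of
`g(y,s) = (sinh y)^s (cosh y)^(N-s)` equals
`(sinh y)⁻¹ (cosh y)^(N-1) (tanh y)^s (s + N sinh²y)`, and this is a decreasing
function of `s` on `[1, N]`. -/
theorem stmt2 (N : ℕ) (hN : 7 ≤ N) (y : ℝ) (hy : 0 < y) :
    (∀ s ∈ Icc (1 : ℝ) (N : ℝ),
      HasDerivAt (fun z : ℝ => (Real.sinh z) ^ s * (Real.cosh z) ^ ((N : ℝ) - s))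
        ((Real.sinh y)⁻¹ * (Real.cosh y) ^ ((N : ℝ) - 1) * (Real.tanh y) ^ s
          * (s + (N : ℝ) * (Real.sinh y) ^ 2)) y) ∧
    AntitoneOn (fun s : ℝ =>
        (Real.sinh y)⁻¹ * (Real.cosh y) ^ ((N : ℝ) - 1) * (Real.tanh y) ^ s
          * (s + (N : ℝ) * (Real.sinh y) ^ 2))
      (Icc (1 : ℝ) (N : ℝ)) := by
  have hS : 0 < Real.sinh y := Real.sinh_pos_iff.2 hy
  have hC : 0 < Real.cosh y := Real.cosh_pos y
  have hC2 : Real.cosh y ^ 2 = 1 + Real.sinh y ^ 2 := by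
    rw [Real.cosh_sq]; ring
  have hN7 : (7:ℝ) ≤ (N:ℝ) := by exact_mod_cast hN
  have htpos : 0 < Real.tanh y := by
    rw [Real.tanh_eq_sinh_div_cosh]; positivity
  have hlogneg : Real.log (Real.tanh y) < 0 := by
    apply Real.log_neg htpos
    rw [Real.tanh_eq_sinh_div_cosh, div_lt_one hC]
    exact Real.sinh_lt_cosh y
  -- key inequality : (s + N sinh²) * (-log tanh) ≥ 1
  have hkey : ∀ s : ℝ, 1 ≤ s →
      1 ≤ (s + (N:ℝ) * Real.sinh y ^ 2) * (-Real.log (Real.tanh y)) := by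
    intro s hs1
    have hv : 0 ≤ (Real.sinh y ^ 2)⁻¹ := by positivity
    have hp := pade hv
    have h1v : 1 + (Real.sinh y ^ 2)⁻¹ = Real.cosh y ^ 2 / Real.sinh y ^ 2 := by
      field_simp; linarith [hC2]
    have hneg : -Real.log (Real.tanh y) = Real.log (Real.cosh y) - Real.log (Real.sinh y) := by
      rw [Real.tanh_eq_sinh_div_cosh, Real.log_div hS.ne' hC.ne']; ring
    have hlog2 : Real.log (1 + (Real.sinh y ^ 2)⁻¹)
        = 2 * (Real.log (Real.cosh y) - Real.log (Real.sinh y)) := by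
      rw [h1v, Real.log_div (by positivity) (by positivity), Real.log_pow, Real.log_pow]
      push_cast; ring
    have hfrac : 2 * (Real.sinh y ^ 2)⁻¹ / (2 + (Real.sinh y ^ 2)⁻¹)
        = 2 / (2 * Real.sinh y ^ 2 + 1) := by
      rw [div_eq_div_iff (by positivity) (by positivity)]
      field_simp
    rw [hfrac, hlog2] at hp
    set L := Real.log (Real.cosh y) - Real.log (Real.sinh y) with hL
    rw [hneg]
    have hX : (0:ℝ) < 2 * Real.sinh y ^ 2 + 1 := by positivity
    rw [div_le_iff₀ hX] at hp
    have hLpos : 0 ≤ L := by nlinarith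
    have hsA : 1 + 7 * Real.sinh y ^ 2 ≤ s + (N:ℝ) * Real.sinh y ^ 2 := by
      nlinarith [sq_nonneg (Real.sinh y)]
    nlinarith [mul_le_mul_of_nonneg_right hsA hLpos, sq_nonneg (Real.sinh y)]
  constructor
  · intro s hs
    have h1 : HasDerivAt (fun z : ℝ => Real.sinh z ^ s)
        (Real.cosh y * s * Real.sinh y ^ (s - 1)) y :=
      (Real.hasDerivAt_sinh y).rpow_const (Or.inl hS.ne')
    have h2 : HasDerivAt (fun z : ℝ => Real.cosh z ^ ((N:ℝ) - s))
        (Real.sinh y * ((N:ℝ) - s) * Real.cosh y ^ ((N:ℝ) - s - 1)) y :=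
      (Real.hasDerivAt_cosh y).rpow_const (Or.inl hC.ne')
    have hmul := h1.mul h2
    refine hmul.congr_deriv (Eq.symm ?_)
    have hSs : 0 < Real.sinh y ^ s := Real.rpow_pos_of_pos hS s
    have hCs : 0 < Real.cosh y ^ s := Real.rpow_pos_of_pos hC s
    have hCN : 0 < Real.cosh y ^ (N:ℝ) := Real.rpow_pos_of_pos hC (N:ℝ)
    rw [Real.tanh_eq_sinh_div_cosh, Real.div_rpow hS.le hC.le,
      Real.rpow_sub hC (N:ℝ) 1, Real.rpow_sub hS s 1,
      Real.rpow_sub hC ((N:ℝ) - s) 1, Real.rpow_sub hC (N:ℝ) s,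
      Real.rpow_one, Real.rpow_one,
      show s + (N:ℝ) * Real.sinh y ^ 2
        = s * Real.cosh y ^ 2 + ((N:ℝ) - s) * Real.sinh y ^ 2 by rw [hC2]; ring]
    field_simp
  · have hds : ∀ s : ℝ, HasDerivAt (fun s : ℝ =>
        (Real.sinh y)⁻¹ * Real.cosh y ^ ((N:ℝ) - 1) * Real.tanh y ^ s
          * (s + (N:ℝ) * Real.sinh y ^ 2))
        ((Real.sinh y)⁻¹ * Real.cosh y ^ ((N:ℝ) - 1)
            * (Real.tanh y ^ s * Real.log (Real.tanh y)) * (s + (N:ℝ) * Real.sinh y ^ 2)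
          + (Real.sinh y)⁻¹ * Real.cosh y ^ ((N:ℝ) - 1) * Real.tanh y ^ s * 1) s := by
      intro s
      have hb : HasDerivAt (fun s : ℝ => Real.tanh y ^ s)
          (Real.tanh y ^ s * Real.log (Real.tanh y)) s :=
        (Real.hasStrictDerivAt_const_rpow htpos s).hasDerivAt
      exact (hb.const_mul _).mul ((hasDerivAt_id s).add_const _)
    apply antitoneOn_of_deriv_nonpos (convex_Icc _ _)
    · exact Continuous.continuousOn (by
        have : Differentiable ℝ _ := fun s => (hds s).differentiableAt
        exact this.continuous)
    · exact fun s _ => ((hds s).differentiableAt).differentiableWithinAt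
    · intro s hs
      rw [interior_Icc] at hs
      rw [(hds s).deriv]
      have hts : 0 < Real.tanh y ^ s := Real.rpow_pos_of_pos htpos s
      have hCN1 : 0 < Real.cosh y ^ ((N:ℝ) - 1) := Real.rpow_pos_of_pos hC _
      have hk := hkey s hs.1.le
      have hfactor : (Real.sinh y)⁻¹ * Real.cosh y ^ ((N:ℝ) - 1)
            * (Real.tanh y ^ s * Real.log (Real.tanh y)) * (s + (N:ℝ) * Real.sinh y ^ 2)
          + (Real.sinh y)⁻¹ * Real.cosh y ^ ((N:ℝ) - 1) * Real.tanh y ^ s * 1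
          = ((Real.sinh y)⁻¹ * Real.cosh y ^ ((N:ℝ) - 1) * Real.tanh y ^ s)
            * (Real.log (Real.tanh y) * (s + (N:ℝ) * Real.sinh y ^ 2) + 1) := by ring
      rw [hfactor]
      apply mul_nonpos_of_nonneg_of_nonpos (by positivity)
      nlinarith [hk]
end

section
/- For every y > 0 and every real s with 1 ≤ s ≤ N and N ≥ 7, one has (coth y)^{s + N (sinh y)^2} ≥ e. -/
open Real

/-- For `N ≥ 7`, `1 ≤ s ≤ N` and `y > 0`, one has `(coth y)^(s + N sinh²y) ≥ e`. -/
theorem stmt3 (N : ℕ) (hN : 7 ≤ N) (s : ℝ) (hs1 : 1 ≤ s) (hsN : s ≤ (N : ℝ))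
    (y : ℝ) (hy : 0 < y) :
    Real.exp 1 ≤ (Real.cosh y / Real.sinh y) ^ (s + (N : ℝ) * (Real.sinh y) ^ 2) := by
  set t := Real.sinh y with ht
  set c := Real.cosh y with hc
  have ht0 : 0 < t := Real.sinh_pos_iff.mpr hy
  have hc1 : 1 ≤ c := Real.one_le_cosh y
  have hc0 : 0 < c := lt_of_lt_of_le one_pos hc1
  have htc : t < c := Real.sinh_lt_cosh y
  have hb0 : 0 < c / t := div_pos hc0 ht0
  have hN7 : (7 : ℝ) ≤ (N : ℝ) := by exact_mod_cast hN
  have hp1 : (1 : ℝ) ≤ s + (N : ℝ) * t ^ 2 :=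
    le_add_of_le_of_nonneg hs1 (by positivity)
  rw [Real.rpow_def_of_pos hb0, Real.exp_le_exp]
  rcases le_or_gt t (Real.exp (-1)) with hcase | hcase
  · -- small t : log (c/t) ≥ 1
    have hlog : (1 : ℝ) ≤ Real.log (c / t) := by
      have h1 : Real.log t ≤ -1 := by
        calc Real.log t ≤ Real.log (Real.exp (-1)) :=
              Real.log_le_log ht0 hcase
          _ = -1 := Real.log_exp _
      have : Real.log (c / t) = Real.log c - Real.log t :=
        Real.log_div (ne_of_gt hc0) (ne_of_gt ht0)
      have hlc : 0 ≤ Real.log c := Real.log_nonneg hc1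
      linarith
    nlinarith [mul_le_mul hlog hp1 (by linarith) (by linarith)]
  · -- large t : t ≥ exp(-1) ≥ 1/3
    have ht3 : (1 : ℝ) / 3 < t := by
      have he : Real.exp 1 < 2.7182818286 := Real.exp_one_lt_d9
      have h3 : Real.exp (-1) > 1 / 3 := by
        rw [Real.exp_neg]
        rw [gt_iff_lt, lt_inv_comm₀ (by norm_num) (Real.exp_pos 1)]
        linarith
      linarith
    have hsq : c ^ 2 - t ^ 2 = 1 := Real.cosh_sq_sub_sinh_sq y
    -- log (c/t) ≥ (c - t)/c
    have hlog : (c - t) / c ≤ Real.log (c / t) := by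
      have hx : (0 : ℝ) < t / c := div_pos ht0 hc0
      have := Real.log_le_sub_one_of_pos hx
      have hld : Real.log (t / c) = - Real.log (c / t) := by
        rw [Real.log_div (ne_of_gt ht0) (ne_of_gt hc0),
          Real.log_div (ne_of_gt hc0) (ne_of_gt ht0)]
        ring
      rw [hld] at this
      have : (1 : ℝ) - t / c ≤ Real.log (c / t) := by linarith
      calc (c - t) / c = 1 - t / c := by field_simp
        _ ≤ Real.log (c / t) := this
    -- key : (1 + 7 t²)(c - t) ≥ c
    have hkey : c ≤ (1 + 7 * t ^ 2) * (c - t) := by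
      nlinarith [sq_nonneg (c - t), sq_nonneg t, mul_pos ht0 hc0]
    have hp7 : (1 : ℝ) + 7 * t ^ 2 ≤ s + (N : ℝ) * t ^ 2 := by
      nlinarith [sq_nonneg t]
    have hlogpos : 0 < Real.log (c / t) := Real.log_pos ((one_lt_div ht0).mpr htc)
    have h1 : (1 : ℝ) ≤ (c - t) / c * (1 + 7 * t ^ 2) := by
      rw [div_mul_eq_mul_div, le_div_iff₀ hc0]
      nlinarith
    calc (1 : ℝ) ≤ (c - t) / c * (1 + 7 * t ^ 2) := h1
      _ ≤ Real.log (c / t) * (s + (N : ℝ) * t ^ 2) := by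
          apply mul_le_mul hlog hp7 (by positivity) (le_of_lt hlogpos)
end

section
/- For y > arccoth(e) (i.e., coth y < e), the function y ↦ (coth y)^{(sinh y)^2} is increasing in y, and hence (coth y)^{(sinh y)^2} ≥ e^{1/(e²−1)} for all such y. -/
open Real Set

noncomputable def gaux (y : ℝ) : ℝ :=
  Real.sinh y ^ 2 * (Real.log (Real.cosh y) - Real.log (Real.sinh y))

lemma gaux_hasDerivAt {y : ℝ} (hy : 0 < y) :
    HasDerivAt gaux
      (2 * Real.sinh y * Real.cosh y * (Real.log (Real.cosh y) - Real.log (Real.sinh y))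
        + Real.sinh y ^ 2 * (Real.sinh y / Real.cosh y - Real.cosh y / Real.sinh y)) y := by
  have hs : Real.sinh y ≠ 0 := ne_of_gt (Real.sinh_pos_iff.mpr hy)
  have hc : Real.cosh y ≠ 0 := ne_of_gt (Real.cosh_pos y)
  have h1 : HasDerivAt (fun y => Real.sinh y ^ 2) (2 * Real.sinh y * Real.cosh y) y := by
    have := (Real.hasDerivAt_sinh y).fun_pow 2
    simpa [mul_comm, mul_assoc, mul_left_comm] using this
  have h2 : HasDerivAt (fun y => Real.log (Real.cosh y)) (Real.sinh y / Real.cosh y) y :=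
    (Real.hasDerivAt_cosh y).log hc
  have h3 : HasDerivAt (fun y => Real.log (Real.sinh y)) (Real.cosh y / Real.sinh y) y :=
    (Real.hasDerivAt_sinh y).log hs
  have := h1.fun_mul (h2.fun_sub h3)
  exact this

lemma gaux_deriv_pos {y : ℝ} (hy : 0 < y) :
    0 < 2 * Real.sinh y * Real.cosh y * (Real.log (Real.cosh y) - Real.log (Real.sinh y))
        + Real.sinh y ^ 2 * (Real.sinh y / Real.cosh y - Real.cosh y / Real.sinh y) := by
  set s := Real.sinh y with hsdef
  set c := Real.cosh y with hcdef
  have hs : 0 < s := Real.sinh_pos_iff.mpr hy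
  have hc : 0 < c := Real.cosh_pos y
  have hid : c ^ 2 - s ^ 2 = 1 := Real.cosh_sq_sub_sinh_sq y
  have hcs : s < c := by nlinarith
  have hL : 1 - s / c ≤ Real.log c - Real.log s := by
    have h := Real.log_le_sub_one_of_pos (div_pos hs hc)
    rw [Real.log_div hs.ne' hc.ne'] at h
    linarith
  have hfrac : 1 - s / c = (c - s) / c := by field_simp
  have hkey : 1 / (2 * c ^ 2) < 1 - s / c := by
    rw [hfrac, div_lt_div_iff₀ (by positivity) hc]
    nlinarith [sq_nonneg (c - s)]
  have hL2 : 1 / (2 * c ^ 2) < Real.log c - Real.log s := lt_of_lt_of_le hkey hL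
  have hE : s ^ 2 * (s / c - c / s) = -(s / c) := by
    field_simp
    linear_combination -hid
  rw [hE]
  have h2 : 2 * s * c * (1 / (2 * c ^ 2)) = s / c := by
    field_simp
  calc 0 = 2 * s * c * (1 / (2 * c ^ 2)) + -(s / c) := by rw [h2]; ring
    _ < 2 * s * c * (Real.log c - Real.log s) + -(s / c) := by
        have := mul_lt_mul_of_pos_left hL2 (by positivity : (0:ℝ) < 2 * s * c)
        linarith

lemma gaux_strictMono : StrictMonoOn gaux (Ioi (0:ℝ)) := by
  apply strictMonoOn_of_deriv_pos (convex_Ioi 0)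
  · exact fun x hx => ((gaux_hasDerivAt hx).continuousAt).continuousWithinAt
  · intro x hx
    rw [interior_Ioi] at hx
    rw [(gaux_hasDerivAt hx).deriv]
    exact gaux_deriv_pos hx

lemma f_eq {y : ℝ} (hy : 0 < y) :
    (Real.cosh y / Real.sinh y) ^ ((Real.sinh y) ^ 2) = Real.exp (gaux y) := by
  have hs : 0 < Real.sinh y := Real.sinh_pos_iff.mpr hy
  have hc : 0 < Real.cosh y := Real.cosh_pos y
  rw [Real.rpow_def_of_pos (div_pos hc hs), Real.log_div hc.ne' hs.ne', gaux]
  ring_nf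

/-- On the set of `y > 0` with `coth y < e`, the function `y ↦ (coth y)^(sinh²y)` is
strictly increasing, and on this set it is at least `e^(1/(e²-1))`. -/
theorem stmt4 :
    StrictMonoOn (fun y : ℝ => (Real.cosh y / Real.sinh y) ^ ((Real.sinh y) ^ 2))
      {y : ℝ | 0 < y ∧ Real.cosh y / Real.sinh y < Real.exp 1} ∧
    ∀ y : ℝ, 0 < y → Real.cosh y / Real.sinh y < Real.exp 1 →
      Real.exp (1 / (Real.exp 1 ^ 2 - 1))
        ≤ (Real.cosh y / Real.sinh y) ^ ((Real.sinh y) ^ 2) := by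
  have he1 : (1:ℝ) < Real.exp 1 := by
    have := Real.add_one_le_exp (1:ℝ); linarith
  constructor
  · intro a ha b hb hab
    have ha0 : 0 < a := ha.1
    have hb0 : 0 < b := hb.1
    simp only
    rw [f_eq ha0, f_eq hb0]
    exact Real.exp_lt_exp.mpr (gaux_strictMono ha0 hb0 hab)
  · intro y hy hcoth
    set E : ℝ := Real.exp 1 ^ 2 with hEdef
    have he2 : (0:ℝ) < E - 1 := by rw [hEdef]; nlinarith
    set t : ℝ := (Real.sqrt (E - 1))⁻¹ with ht
    have ht0 : 0 < t := by positivity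
    set y₀ : ℝ := Real.arsinh t with hy₀def
    have hsinh : Real.sinh y₀ = t := Real.sinh_arsinh t
    have hy₀pos : 0 < y₀ := Real.sinh_pos_iff.mp (hsinh ▸ ht0)
    have ht2 : t ^ 2 = 1 / (E - 1) := by
      rw [ht, inv_pow, Real.sq_sqrt he2.le, one_div]
    have hcosh : Real.cosh y₀ = Real.exp 1 * t := by
      have h1 : Real.cosh y₀ = Real.sqrt (1 + t ^ 2) := by
        rw [hy₀def, Real.cosh_arsinh]
      have h2 : 1 + t ^ 2 = (Real.exp 1 * t) ^ 2 := by
        rw [mul_pow, ht2, ← hEdef]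
        field_simp
        ring
      rw [h1, h2, Real.sqrt_sq (by positivity)]
    have hgy₀ : gaux y₀ = 1 / (E - 1) := by
      rw [gaux, hsinh, hcosh, Real.log_mul (Real.exp_pos 1).ne' ht0.ne', Real.log_exp]
      rw [ht2]; ring
    have hylt : y₀ < y := by
      have hs : 0 < Real.sinh y := Real.sinh_pos_iff.mpr hy
      have h1 : Real.cosh y < Real.exp 1 * Real.sinh y := by
        rwa [div_lt_iff₀ hs] at hcoth
      have h2 : 0 < Real.sinh (y - y₀) := by
        rw [Real.sinh_sub, hsinh, hcosh]
        nlinarith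
      linarith [Real.sinh_pos_iff.mp h2]
    rw [f_eq hy, ← hgy₀]
    exact Real.exp_le_exp.mpr (gaux_strictMono (mem_Ioi.mpr hy₀pos) (mem_Ioi.mpr hy) hylt).le
end

section
/- Let (Y_1,…,Y_K) have the Dirichlet distribution Dir(α_1,…,α_K) with all α_i > 0, and let β_1,…,β_K be nonnegative integers. Then E[∏_{i=1}^K Y_i^{β_i}] ≤ ∏_{i=1}^K E[Y_i^{β_i}]. Explicitly, Γ(A)/Γ(A+B) ∏_i Γ(α_i+β_i)/Γ(α_i) ≤ ∏_i [Γ(A)/Γ(A+β_i)] · [Γ(α_i+β_i)/Γ(α_i)], where A = ∑_i α_i and B = ∑_i β_i. -/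
open Real Finset

/-- Ascending factorial `∏_{j<n} (A + j)`. -/
noncomputable def ascf (A : ℝ) (n : ℕ) : ℝ := ∏ j ∈ Finset.range n, (A + j)

lemma ascf_pos {A : ℝ} (hA : 0 < A) (n : ℕ) : 0 < ascf A n := by
  apply Finset.prod_pos
  intro j _
  positivity

lemma Gamma_add_nat_eq {A : ℝ} (hA : 0 < A) (n : ℕ) :
    Real.Gamma (A + n) = Real.Gamma A * ascf A n := by
  induction n with
  | zero => simp [ascf]
  | succ n ih =>
    have h1 : A + (n + 1 : ℕ) = (A + n) + 1 := by push_cast; ring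
    have h2 : A + (n : ℝ) ≠ 0 := by positivity
    rw [h1, Real.Gamma_add_one h2, ih]
    simp only [ascf, Finset.prod_range_succ]
    ring

lemma ascf_superadd {A : ℝ} (hA : 0 < A) (m n : ℕ) :
    ascf A m * ascf A n ≤ ascf A (m + n) := by
  rw [ascf, ascf, ascf, Finset.prod_range_add]
  apply mul_le_mul_of_nonneg_left _ (le_of_lt (ascf_pos hA m))
  apply Finset.prod_le_prod
  · intro j _; positivity
  · intro j _
    push_cast
    linarith [Nat.cast_nonneg (α := ℝ) m]

lemma ascf_prod_le {A : ℝ} (hA : 0 < A) {ι : Type*} (s : Finset ι) (β : ι → ℕ) :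
    ∏ i ∈ s, ascf A (β i) ≤ ascf A (∑ i ∈ s, β i) := by
  induction s using Finset.cons_induction with
  | empty => simp [ascf]
  | cons a s ha ih =>
    rw [Finset.prod_cons, Finset.sum_cons]
    calc ascf A (β a) * ∏ i ∈ s, ascf A (β i)
        ≤ ascf A (β a) * ascf A (∑ i ∈ s, β i) :=
          mul_le_mul_of_nonneg_left ih (le_of_lt (ascf_pos hA _))
      _ ≤ ascf A (β a + ∑ i ∈ s, β i) := ascf_superadd hA _ _

/-- Negative correlation of Dirichlet moments, stated via the explicit Gamma-function
formula: for `α_i > 0` and nonnegative integers `β_i`, with `A = ∑ α_i`, `B = ∑ β_i`,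
`Γ(A)/Γ(A+B) ∏ Γ(α_i+β_i)/Γ(α_i) ≤ ∏ (Γ(A)/Γ(A+β_i)) (Γ(α_i+β_i)/Γ(α_i))`. -/
theorem stmt5 (K : ℕ) (α : Fin K → ℝ) (hα : ∀ i, 0 < α i) (β : Fin K → ℕ) :
    Real.Gamma (∑ i, α i) / Real.Gamma ((∑ i, α i) + (∑ i, (β i : ℝ)))
        * ∏ i, Real.Gamma (α i + (β i : ℝ)) / Real.Gamma (α i)
      ≤ ∏ i, (Real.Gamma (∑ j, α j) / Real.Gamma ((∑ j, α j) + (β i : ℝ)))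
          * (Real.Gamma (α i + (β i : ℝ)) / Real.Gamma (α i)) := by
  rcases Nat.eq_zero_or_pos K with hK | hK
  · subst hK
    simp [Real.Gamma_zero]
  set A := ∑ i, α i with hAdef
  have hA : 0 < A := Finset.sum_pos (fun i _ => hα i) (by simpa using Finset.univ_nonempty_iff.2 ⟨⟨0, hK⟩⟩)
  have hGA : 0 < Real.Gamma A := Real.Gamma_pos_of_pos hA
  have hsum : (∑ i, (β i : ℝ)) = ((∑ i, β i : ℕ) : ℝ) := by push_cast; ring
  have key : ∀ n : ℕ, Real.Gamma A / Real.Gamma (A + n) = 1 / ascf A n := by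
    intro n
    rw [Gamma_add_nat_eq hA n]
    rw [div_mul_eq_div_div, div_self (ne_of_gt hGA)]
  have hC : ∀ i, 0 ≤ Real.Gamma (α i + (β i : ℝ)) / Real.Gamma (α i) := by
    intro i
    have h1 : 0 < α i + (β i : ℝ) := by have := hα i; positivity
    exact div_nonneg (Real.Gamma_pos_of_pos h1).le (Real.Gamma_pos_of_pos (hα i)).le
  rw [hsum, key, Finset.prod_mul_distrib]
  have : ∏ i, Real.Gamma A / Real.Gamma (A + (β i : ℝ)) = ∏ i, 1 / ascf A (β i) := by
    apply Finset.prod_congr rfl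
    intro i _
    exact key (β i)
  rw [this]
  apply mul_le_mul_of_nonneg_right _ (Finset.prod_nonneg fun i _ => hC i)
  rw [Finset.prod_div_distrib, Finset.prod_const_one]
  exact one_div_le_one_div_of_le (Finset.prod_pos fun i _ => ascf_pos hA _)
    (ascf_prod_le hA Finset.univ β)
end

section
/- There is an absolute constant C > 0 such that for all integers L > i_1 ≥ 2, all t > 0, and all nonnegative integers β_1 with β_1 ≤ t(i_1 − 1): (L−1)!/(L+β_1−1)! · (i_1+β_1−1)!/(i_1−1)! ≤ C √(1+t) · ((i_1−1)/(L−1) · (1+t)^{1+1/t}/e)^{β_1}. -/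
open Real

lemma phi_mono : StrictMonoOn (fun x : ℝ => (1 + x⁻¹) * Real.log (1 + x)) (Set.Ioi 0) := by
  have hderiv : ∀ x : ℝ, 0 < x → HasDerivAt (fun x : ℝ => (1 + x⁻¹) * Real.log (1 + x))
      (-(x ^ 2)⁻¹ * Real.log (1 + x) + (1 + x⁻¹) * (1 / (1 + x))) x := by
    intro x hx
    have h1 : HasDerivAt (fun x : ℝ => 1 + x⁻¹) (-(x ^ 2)⁻¹) x :=
      (hasDerivAt_inv hx.ne').const_add 1
    have h2 : HasDerivAt (fun x : ℝ => 1 + x) 1 x := (hasDerivAt_id x).const_add 1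
    have h3 : HasDerivAt (fun x : ℝ => Real.log (1 + x)) (1 / (1 + x)) x := by
      simpa using h2.log (by positivity)
    simpa using h1.fun_mul h3
  apply strictMonoOn_of_deriv_pos (convex_Ioi 0)
  · intro x hx
    exact (hderiv x hx).differentiableAt.continuousAt.continuousWithinAt
  · intro x hx
    rw [interior_Ioi] at hx
    have hx : 0 < x := hx
    rw [(hderiv x hx).deriv]
    have hlog : Real.log (1 + x) < x := by
      have := Real.log_lt_sub_one_of_pos (x := 1 + x) (by linarith) (by linarith)
      linarith
    have key : -(x ^ 2)⁻¹ * Real.log (1 + x) + (1 + x⁻¹) * (1 / (1 + x))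
        = (x - Real.log (1 + x)) / x ^ 2 := by
      field_simp
      ring
    rw [key]
    apply div_pos (by linarith) (by positivity)

lemma fact_eq_stirling (n : ℕ) (hn : 1 ≤ n) :
    (n.factorial : ℝ) = Stirling.stirlingSeq n * (Real.sqrt (2 * n) * ((n : ℝ) / Real.exp 1) ^ n) := by
  have hn' : (0:ℝ) < n := by exact_mod_cast hn
  have h : Real.sqrt (2 * n) * ((n : ℝ) / Real.exp 1) ^ n ≠ 0 := by positivity
  rw [Stirling.stirlingSeq, div_mul_cancel₀ _ h]

lemma stirling_anti {a n : ℕ} (ha : 1 ≤ a) (han : a ≤ n) :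
    Stirling.stirlingSeq n ≤ Stirling.stirlingSeq a := by
  obtain ⟨a', rfl⟩ : ∃ a', a = a' + 1 := ⟨a - 1, by omega⟩
  obtain ⟨m, rfl⟩ : ∃ m, n = m + 1 := ⟨n - 1, by omega⟩
  exact Stirling.stirlingSeq'_antitone (by omega)

/-- Uniform bound on Beta moments: there is an absolute constant `C > 0` such that for
all integers `L > i₁ ≥ 2`, all `t > 0` and nonnegative integers `β₁ ≤ t(i₁−1)`,
`(L−1)!/(L+β₁−1)! · (i₁+β₁−1)!/(i₁−1)! ≤ C √(1+t) ((i₁−1)/(L−1) · (1+t)^{1+1/t}/e)^{β₁}`. -/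
theorem stmt7 :
    ∃ C : ℝ, 0 < C ∧ ∀ (L i₁ : ℕ) (t : ℝ) (β₁ : ℕ),
      2 ≤ i₁ → i₁ < L → 0 < t → (β₁ : ℝ) ≤ t * ((i₁ : ℝ) - 1) →
      ((L - 1).factorial : ℝ) / ((L + β₁ - 1).factorial : ℝ)
          * ((i₁ + β₁ - 1).factorial : ℝ) / ((i₁ - 1).factorial : ℝ)
        ≤ C * Real.sqrt (1 + t)
          * ((((i₁ : ℝ) - 1) / ((L : ℝ) - 1)) * (1 + t) ^ (1 + 1 / t) / Real.exp 1) ^ β₁ := by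
  refine ⟨1, one_pos, ?_⟩
  intro L i₁ t β₁ hi hiL ht hβ
  set a := i₁ - 1 with ha
  set M := L - 1 with hM
  have ha1 : 1 ≤ a := by omega
  have haM : a + 1 ≤ M := by omega
  have hiA : ((a : ℕ) : ℝ) = (i₁ : ℝ) - 1 := by
    rw [ha, Nat.cast_sub (by omega)]; norm_num
  have hLM : ((M : ℕ) : ℝ) = (L : ℝ) - 1 := by
    rw [hM, Nat.cast_sub (by omega)]; norm_num
  rw [show L + β₁ - 1 = M + β₁ from by omega, show i₁ + β₁ - 1 = a + β₁ from by omega,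
    ← hiA, ← hLM]
  set A : ℝ := (a : ℝ) with hAdef
  set Mr : ℝ := (M : ℝ) with hMrdef
  set B : ℝ := (β₁ : ℝ) with hBdef
  have hA0 : (0:ℝ) < A := by rw [hAdef]; exact_mod_cast ha1
  have hA1 : (1:ℝ) ≤ A := by rw [hAdef]; exact_mod_cast ha1
  have hM0 : (0:ℝ) < Mr := by rw [hMrdef]; exact_mod_cast (by omega : 0 < M)
  have hB0 : (0:ℝ) ≤ B := by rw [hBdef]; positivity
  have hBt : B ≤ t * A := by rw [hiA]; exact hβ
  have ht1 : (0:ℝ) < 1 + t := by linarith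
  set φt : ℝ := Real.log (1 + t) * (1 + 1 / t) with hφt
  have hN : ((a + β₁ : ℕ) : ℝ) = A + B := by push_cast; rfl
  -- step 3 : core power bound
  have h3 : ((A + B) / A) ^ (a + β₁) ≤ Real.exp (B * φt) := by
    rcases Nat.eq_zero_or_pos β₁ with hb0 | hb1
    · subst hb0
      simp only [hBdef, Nat.cast_zero, add_zero, div_self hA0.ne', one_pow, zero_mul,
        Real.exp_zero, le_refl]
    · have hB1 : (0:ℝ) < B := by rw [hBdef]; exact_mod_cast hb1
      have hz0 : 0 < B / A := div_pos hB1 hA0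
      have hzt : B / A ≤ t := (div_le_iff₀ hA0).2 (by linarith [hBt])
      have hbase : (0:ℝ) < (A + B) / A := by positivity
      rw [← Real.rpow_natCast _ (a + β₁), Real.rpow_def_of_pos hbase, Real.exp_le_exp, hN]
      have hmono := phi_mono.monotoneOn (Set.mem_Ioi.2 hz0) (Set.mem_Ioi.2 ht) hzt
      have h1z : (1:ℝ) + B / A = (A + B) / A := by field_simp
      have hmul : B * ((1 + (B / A)⁻¹) * Real.log (1 + B / A))
          = Real.log ((A + B) / A) * (A + B) := by
        rw [h1z]
        field_simp
        ring
      have := mul_le_mul_of_nonneg_left hmono hB0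
      rw [hmul] at this
      calc Real.log ((A + B) / A) * (A + B)
          ≤ B * ((1 + t⁻¹) * Real.log (1 + t)) := this
        _ = B * φt := by rw [hφt]; ring
  -- sqrt bound
  have hsqrt : Real.sqrt (2 * (A + B)) ≤ Real.sqrt (1 + t) * Real.sqrt (2 * A) := by
    rw [← Real.sqrt_mul (by linarith : (0:ℝ) ≤ 1 + t)]
    apply Real.sqrt_le_sqrt
    nlinarith
  -- power bound
  have hpow : ((A + B) / Real.exp 1) ^ (a + β₁)
      ≤ Real.exp (B * φt) * ((A ^ β₁ / Real.exp 1 ^ β₁) * ((A / Real.exp 1) ^ a)) := by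
    have he0 : (0:ℝ) < Real.exp 1 := Real.exp_pos 1
    have hsplit : ((A + B) / Real.exp 1) ^ (a + β₁)
        = ((A + B) / A) ^ (a + β₁) * ((A / Real.exp 1) ^ a * (A ^ β₁ / Real.exp 1 ^ β₁)) := by
      rw [← div_pow, ← pow_add, ← mul_pow]
      congr 1
      field_simp
    rw [hsplit]
    have h4 := mul_le_mul_of_nonneg_right h3
      (by positivity : (0:ℝ) ≤ (A / Real.exp 1) ^ a * (A ^ β₁ / Real.exp 1 ^ β₁))
    calc ((A + B) / A) ^ (a + β₁) * ((A / Real.exp 1) ^ a * (A ^ β₁ / Real.exp 1 ^ β₁))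
        ≤ Real.exp (B * φt) * ((A / Real.exp 1) ^ a * (A ^ β₁ / Real.exp 1 ^ β₁)) := h4
      _ = Real.exp (B * φt) * ((A ^ β₁ / Real.exp 1 ^ β₁) * ((A / Real.exp 1) ^ a)) := by ring
  -- factorial ratio bound
  have hfa0 : (0:ℝ) < (a.factorial : ℝ) := by exact_mod_cast a.factorial_pos
  have hK : ((a + β₁).factorial : ℝ)
      ≤ (Real.sqrt (1 + t) * Real.exp (B * φt) * (A ^ β₁ / Real.exp 1 ^ β₁))
        * (a.factorial : ℝ) := by
    rw [fact_eq_stirling (a + β₁) (by omega), fact_eq_stirling a ha1, hN, ← hAdef]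
    have hS : Stirling.stirlingSeq (a + β₁) ≤ Stirling.stirlingSeq a :=
      stirling_anti ha1 (by omega)
    have hSa : 0 < Stirling.stirlingSeq a := by
      have h := Stirling.stirlingSeq'_pos (a - 1)
      rwa [show a - 1 + 1 = a from by omega] at h
    calc Stirling.stirlingSeq (a + β₁) * (Real.sqrt (2 * (A + B)) * ((A + B) / Real.exp 1) ^ (a + β₁))
        ≤ Stirling.stirlingSeq a * ((Real.sqrt (1 + t) * Real.sqrt (2 * A))
            * (Real.exp (B * φt) * ((A ^ β₁ / Real.exp 1 ^ β₁) * ((A / Real.exp 1) ^ a)))) := by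
          apply mul_le_mul hS _ (by positivity) hSa.le
          exact mul_le_mul hsqrt hpow (by positivity) (by positivity)
      _ = (Real.sqrt (1 + t) * Real.exp (B * φt) * (A ^ β₁ / Real.exp 1 ^ β₁))
            * (Stirling.stirlingSeq a * (Real.sqrt (2 * A) * (A / Real.exp 1) ^ a)) := by ring
  -- first ratio bound
  have hfm0 : (0:ℝ) < ((M + β₁).factorial : ℝ) := by exact_mod_cast (M + β₁).factorial_pos
  have h1 : ((M.factorial : ℝ)) / (((M + β₁).factorial : ℝ)) ≤ 1 / Mr ^ β₁ := by
    rw [div_le_div_iff₀ hfm0 (by positivity)]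
    have hnat : ((M.factorial * (M + 1) ^ β₁ : ℕ) : ℝ) ≤ (((M + β₁).factorial : ℕ) : ℝ) := by
      exact_mod_cast Nat.factorial_mul_pow_le_factorial
    push_cast at hnat
    have hmm : Mr ^ β₁ ≤ (Mr + 1) ^ β₁ := pow_le_pow_left₀ hM0.le (by linarith) β₁
    have hMf0 : (0:ℝ) ≤ (M.factorial : ℝ) := by positivity
    nlinarith [mul_le_mul_of_nonneg_left hmm hMf0]
  -- assemble
  have hKdiv : ((a + β₁).factorial : ℝ) / (a.factorial : ℝ)
      ≤ Real.sqrt (1 + t) * Real.exp (B * φt) * (A ^ β₁ / Real.exp 1 ^ β₁) :=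
    (div_le_iff₀ hfa0).2 hK
  have hfinal : ((M.factorial : ℝ)) / (((M + β₁).factorial : ℝ))
        * ((a + β₁).factorial : ℝ) / (a.factorial : ℝ)
      ≤ (1 / Mr ^ β₁) * (Real.sqrt (1 + t) * Real.exp (B * φt) * (A ^ β₁ / Real.exp 1 ^ β₁)) := by
    have hrw : ((M.factorial : ℝ)) / (((M + β₁).factorial : ℝ))
        * ((a + β₁).factorial : ℝ) / (a.factorial : ℝ)
        = (((M.factorial : ℝ)) / (((M + β₁).factorial : ℝ)))
          * (((a + β₁).factorial : ℝ) / (a.factorial : ℝ)) := by ring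
    rw [hrw]
    exact mul_le_mul h1 hKdiv (by positivity) (by positivity)
  refine hfinal.trans (le_of_eq ?_)
  rw [Real.rpow_def_of_pos ht1, ← hφt]
  rw [show A / Mr * Real.exp φt / Real.exp 1 = A * Real.exp φt / (Mr * Real.exp 1) from by ring,
    div_pow, mul_pow, mul_pow, ← Real.exp_nat_mul, ← hBdef]
  field_simp
  rw [hBdef, Real.exp_nat_mul]
end

section
/- Analogously, if N has the 'even-Poisson' law P(N = 2j) = x^{2j}/((2j)! cosh x) and each of the N updates independently lands in an interval of length t with probability t, then the probability that an odd number land in the interval equals sinh(xt) sinh(x(1−t)) / cosh x. -/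
open Real Finset

lemma sum_range_two_mul' (f : ℕ → ℝ) (i : ℕ) :
    ∑ k ∈ Finset.range (2 * i), f k = ∑ j ∈ Finset.range i, (f (2 * j) + f (2 * j + 1)) := by
  induction i with
  | zero => simp
  | succ n ih =>
      have : 2 * (n + 1) = (2 * n) + 1 + 1 := by ring
      rw [this, Finset.sum_range_succ, Finset.sum_range_succ, ih, Finset.sum_range_succ]
      ring

lemma inner_sum_eq (t : ℝ) (i : ℕ) :
    ∑ j ∈ Finset.range i,
        ((Nat.choose (2 * i) (2 * j + 1) : ℝ) * t ^ (2 * j + 1)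
          * (1 - t) ^ (2 * i - 2 * j - 1))
      = (1 - (1 - 2 * t) ^ (2 * i)) / 2 := by
  have h1 : (1 : ℝ) = ∑ k ∈ Finset.range (2 * i + 1),
      t ^ k * (1 - t) ^ (2 * i - k) * (Nat.choose (2 * i) k : ℝ) := by
    have := add_pow t (1 - t) (2 * i)
    simp only [add_sub_cancel, one_pow] at this
    exact this
  have h2 : (1 - 2 * t) ^ (2 * i) = ∑ k ∈ Finset.range (2 * i + 1),
      (-t) ^ k * (1 - t) ^ (2 * i - k) * (Nat.choose (2 * i) k : ℝ) := by
    have := add_pow (-t) (1 - t) (2 * i)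
    have e : -t + (1 - t) = 1 - 2 * t := by ring
    rw [e] at this
    exact this
  have h12 : (1 : ℝ) - (1 - 2 * t) ^ (2 * i) = ∑ k ∈ Finset.range (2 * i + 1),
      (t ^ k * (1 - t) ^ (2 * i - k) * (Nat.choose (2 * i) k : ℝ)
        - (-t) ^ k * (1 - t) ^ (2 * i - k) * (Nat.choose (2 * i) k : ℝ)) := by
    rw [Finset.sum_sub_distrib, ← h1, ← h2]
  rw [h12]
  have htop : ∀ k, t ^ k * (1 - t) ^ (2 * i - k) * (Nat.choose (2 * i) k : ℝ)
      - (-t) ^ k * (1 - t) ^ (2 * i - k) * (Nat.choose (2 * i) k : ℝ)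
      = (1 - (-1 : ℝ) ^ k) * (t ^ k * (1 - t) ^ (2 * i - k) * (Nat.choose (2 * i) k : ℝ)) := by
    intro k
    rw [neg_pow]
    ring
  rw [Finset.sum_congr rfl (fun k _ => htop k), Finset.sum_range_succ]
  have heven : (1 - (-1 : ℝ) ^ (2 * i)) = 0 := by
    rw [pow_mul]; norm_num
  rw [heven, zero_mul, add_zero, sum_range_two_mul']
  rw [eq_div_iff (two_ne_zero), Finset.sum_mul]
  refine Finset.sum_congr rfl fun j hj => ?_
  have hj' : j < i := Finset.mem_range.mp hj
  have he : (1 - (-1 : ℝ) ^ (2 * j)) = 0 := by rw [pow_mul]; norm_num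
  have ho : (1 - (-1 : ℝ) ^ (2 * j + 1)) = 2 := by rw [pow_succ, pow_mul]; norm_num
  rw [he, ho, zero_mul, zero_add]
  have : 2 * i - (2 * j + 1) = 2 * i - 2 * j - 1 := by omega
  rw [this]
  ring

/-- Odd-parity identity for the 'even-Poisson' law: for `x > 0` and `t ∈ [0,1]`,
`∑_i x^{2i}/((2i)! cosh x) ∑_{j : 2j+1 ≤ 2i} C(2i,2j+1) t^{2j+1}(1−t)^{2i−2j−1}
  = sinh(xt) sinh(x(1−t)) / cosh x`. -/
theorem stmt10 (x t : ℝ) (hx : 0 < x) (ht0 : 0 ≤ t) (ht1 : t ≤ 1) :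
    ∑' i : ℕ, (x ^ (2 * i) / ((Nat.factorial (2 * i) : ℝ) * Real.cosh x))
        * ∑ j ∈ Finset.range i,
            ((Nat.choose (2 * i) (2 * j + 1) : ℝ) * t ^ (2 * j + 1)
              * (1 - t) ^ (2 * i - 2 * j - 1))
      = Real.sinh (x * t) * Real.sinh (x * (1 - t)) / Real.cosh x := by
  have hc : Real.cosh x ≠ 0 := (Real.cosh_pos x).ne'
  have h1 : HasSum (fun i : ℕ => x ^ (2 * i) / ((2 * i).factorial : ℝ)) (Real.cosh x) :=
    Real.hasSum_cosh x
  have h2 : HasSum (fun i : ℕ => (x * (1 - 2 * t)) ^ (2 * i) / ((2 * i).factorial : ℝ))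
      (Real.cosh (x * (1 - 2 * t))) := Real.hasSum_cosh _
  have h3 := ((h1.sub h2).div_const (2 * Real.cosh x))
  have key : (fun i : ℕ => (x ^ (2 * i) / ((Nat.factorial (2 * i) : ℝ) * Real.cosh x))
        * ∑ j ∈ Finset.range i,
            ((Nat.choose (2 * i) (2 * j + 1) : ℝ) * t ^ (2 * j + 1)
              * (1 - t) ^ (2 * i - 2 * j - 1)))
      = (fun i : ℕ => (x ^ (2 * i) / ((2 * i).factorial : ℝ)
          - (x * (1 - 2 * t)) ^ (2 * i) / ((2 * i).factorial : ℝ)) / (2 * Real.cosh x)) := by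
    funext i
    rw [inner_sum_eq, mul_pow]
    have hf : ((2 * i).factorial : ℝ) ≠ 0 := Nat.cast_ne_zero.mpr (2 * i).factorial_ne_zero
    field_simp
  rw [key, h3.tsum_eq]
  have hcosh : Real.cosh x - Real.cosh (x * (1 - 2 * t))
      = 2 * (Real.sinh (x * t) * Real.sinh (x * (1 - t))) := by
    have e1 : x = x * t + x * (1 - t) := by ring
    have e2 : x * (1 - 2 * t) = x * (1 - t) - x * t := by ring
    rw [e2, Real.cosh_sub]
    nth_rewrite 1 [e1]
    rw [Real.cosh_add]
    ring
  rw [hcosh]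
  field_simp
end

section
/- Let x₀ = ln(1+√2) (so sinh x₀ = 1, cosh x₀ = √2) and x_c(N) = x₀ − (√2/2)(ln N)/N. If ε_N ≥ 0 satisfies N ε_N → ∞ and ε_N ≤ N^{−2/3}, then N · (sinh(x_c(N) − ε_N))^{N−1} · cosh(x_c(N) − ε_N) → 0 as N → ∞. -/
open Real Filter

set_option maxHeartbeats 1000000 in
/-- Subcritical first-moment bound, antipodal case: with `x₀ = ln(1+√2)` and
`x_c(N) = x₀ − (√2/2)(ln N)/N`, if `ε_N ≥ 0`, `N ε_N → ∞` and `ε_N ≤ N^(−2/3)`, then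
`N (sinh(x_c − ε_N))^{N−1} cosh(x_c − ε_N) → 0`. -/
theorem stmt13 (ε : ℕ → ℝ) (hε0 : ∀ N, 0 ≤ ε N)
    (hεinf : Tendsto (fun N : ℕ => (N : ℝ) * ε N) atTop atTop)
    (hεsmall : ∀ N : ℕ, 1 ≤ N → ε N ≤ (N : ℝ) ^ (-(2 : ℝ) / 3)) :
    Tendsto (fun N : ℕ =>
        (N : ℝ) * (Real.sinh (Real.log (1 + Real.sqrt 2)
            - Real.sqrt 2 / 2 * Real.log N / N - ε N)) ^ (N - 1)
          * Real.cosh (Real.log (1 + Real.sqrt 2)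
            - Real.sqrt 2 / 2 * Real.log N / N - ε N))
      atTop (nhds 0) := by
  set x₀ := Real.log (1 + Real.sqrt 2) with hx₀def
  have hs2 : Real.sqrt 2 * Real.sqrt 2 = 2 := Real.mul_self_sqrt (by norm_num)
  have hs2pos : (0:ℝ) < Real.sqrt 2 := Real.sqrt_pos.2 (by norm_num)
  have hs2le : Real.sqrt 2 ≤ 3/2 := by nlinarith
  have hs2ge : (1:ℝ) ≤ Real.sqrt 2 := by nlinarith
  have h1p : (0:ℝ) < 1 + Real.sqrt 2 := by positivity
  have he : Real.exp x₀ = 1 + Real.sqrt 2 := Real.exp_log h1p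
  have hinv : (1 + Real.sqrt 2)⁻¹ = Real.sqrt 2 - 1 :=
    inv_eq_of_mul_eq_one_right (by linear_combination hs2)
  have hsinh : Real.sinh x₀ = 1 := by
    rw [Real.sinh_eq, Real.exp_neg, he, hinv]; ring
  have hcoshx : Real.cosh x₀ = Real.sqrt 2 := by
    rw [Real.cosh_eq, Real.exp_neg, he, hinv]; ring
  have hx₀half : (1:ℝ)/2 ≤ x₀ := by
    have h2 : Real.log 2 ≤ x₀ := Real.log_le_log (by norm_num) (by linarith)
    linarith [Real.log_two_gt_d9]
  clear_value x₀
  have key : ∀ᶠ N : ℕ in atTop,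
      0 ≤ (N : ℝ) * (Real.sinh (x₀ - Real.sqrt 2 / 2 * Real.log N / N - ε N)) ^ (N - 1)
          * Real.cosh (x₀ - Real.sqrt 2 / 2 * Real.log N / N - ε N) ∧
      (N : ℝ) * (Real.sinh (x₀ - Real.sqrt 2 / 2 * Real.log N / N - ε N)) ^ (N - 1)
          * Real.cosh (x₀ - Real.sqrt 2 / 2 * Real.log N / N - ε N)
        ≤ Real.sqrt 2 * Real.exp (12 - Real.sqrt 2 * ((N:ℝ) * ε N)) := by
    filter_upwards [eventually_ge_atTop 64] with N hN64
    have hNnat1 : 1 ≤ N := by omega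
    have hN1 : (1:ℝ) ≤ (N:ℝ) := by exact_mod_cast Nat.one_le_cast.2 hNnat1
    have hN0 : (0:ℝ) < (N:ℝ) := by linarith
    set L := Real.log (N:ℝ) with hLdef
    have hL0 : 0 ≤ L := Real.log_nonneg hN1
    have hsqN : (8:ℝ) ≤ Real.sqrt N := by
      have h := Real.sqrt_le_sqrt (show (64:ℝ) ≤ (N:ℝ) by exact_mod_cast hN64)
      rwa [show (64:ℝ) = 8^2 by norm_num, Real.sqrt_sq (by norm_num : (0:ℝ) ≤ 8)] at h
    have hsqNpos : (0:ℝ) < Real.sqrt N := by linarith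
    have hsqsq : Real.sqrt N * Real.sqrt N = (N:ℝ) := Real.mul_self_sqrt hN0.le
    have hLsq : L ≤ 2 * Real.sqrt N := by
      have h1 : Real.log (Real.sqrt N) ≤ Real.sqrt N := Real.log_le_self hsqNpos.le
      have h2 : Real.log (Real.sqrt N) = L / 2 := Real.log_sqrt hN0.le
      linarith [h2 ▸ h1]
    have hLN : L / N ≤ 2 / Real.sqrt N := by
      rw [div_le_div_iff₀ hN0 hsqNpos]
      nlinarith
    have hLselfN : L ≤ (N:ℝ) := Real.log_le_self hN0.le
    clear_value L
    have hεle : ε N ≤ 1 / Real.sqrt N := by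
      have h1 := hεsmall N hNnat1
      have h2 : (N:ℝ) ^ (-(2:ℝ)/3) ≤ (N:ℝ) ^ (-(1/2):ℝ) :=
        Real.rpow_le_rpow_of_exponent_le hN1 (by norm_num)
      have h3 : (N:ℝ) ^ (-(1/2):ℝ) = 1 / Real.sqrt N := by
        rw [Real.rpow_neg hN0.le, ← Real.sqrt_eq_rpow, one_div]
      linarith [h3 ▸ h2]
    set d := Real.sqrt 2 / 2 * L / N + ε N with hddef
    clear_value d
    have hd0 : 0 ≤ d := by
      have : 0 ≤ Real.sqrt 2 / 2 * L / N := by positivity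
      have := hε0 N
      rw [hddef]; linarith
    have hdle : d ≤ 3 / Real.sqrt N := by
      have h1 : Real.sqrt 2 / 2 * L / N ≤ L / N := by
        have hq : 0 ≤ L / N := div_nonneg hL0 hN0.le
        have : Real.sqrt 2 / 2 * L / N = Real.sqrt 2 / 2 * (L / N) := by ring
        rw [this]; nlinarith
      have h2 : (2:ℝ) / Real.sqrt N + 1 / Real.sqrt N = 3 / Real.sqrt N := by
        rw [← add_div]; norm_num
      rw [hddef]; linarith
    have hdhalf : d ≤ 1/2 := by
      have h1 : (3:ℝ) / Real.sqrt N ≤ 1/2 := by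
        rw [div_le_div_iff₀ hsqNpos (by norm_num : (0:ℝ) < 2)]; linarith
      linarith
    have haeq : x₀ - Real.sqrt 2 / 2 * L / (N:ℝ) - ε N = x₀ - d := by rw [hddef]; ring
    rw [haeq]
    have ha0 : 0 ≤ x₀ - d := by linarith
    have hs0 : 0 ≤ Real.sinh (x₀ - d) := Real.sinh_nonneg_iff.2 ha0
    have hcosh_le : Real.cosh (x₀ - d) ≤ Real.sqrt 2 := by
      rw [← hcoshx]
      refine Real.cosh_le_cosh.2 ?_
      rw [abs_of_nonneg ha0, abs_of_nonneg (by linarith : (0:ℝ) ≤ x₀)]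
      linarith
    have hsinh_le : Real.sinh (x₀ - d) ≤ Real.exp (d^2 - Real.sqrt 2 * d) := by
      rw [Real.sinh_sub, hsinh, hcoshx, one_mul]
      have hc : Real.cosh d ≤ 1 + d^2 := by
        have h1 := Real.cosh_le_exp_half_sq d
        have habs : |d^2/2| = d^2/2 := abs_of_nonneg (by positivity)
        have h3 := Real.abs_exp_sub_one_le (x := d^2/2) (by rw [habs]; nlinarith)
        rw [habs] at h3
        have h4 := (abs_le.1 h3).2
        linarith
      have hsd : d ≤ Real.sinh d := Real.self_le_sinh_iff.2 hd0
      have h5 : Real.cosh d - Real.sqrt 2 * Real.sinh d ≤ (d^2 - Real.sqrt 2 * d) + 1 := by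
        nlinarith [mul_le_mul_of_nonneg_left hsd hs2pos.le]
      exact h5.trans (Real.add_one_le_exp _)
    have hpow : Real.sinh (x₀ - d) ^ (N - 1)
        ≤ Real.exp (((N:ℝ) - 1) * (d^2 - Real.sqrt 2 * d)) := by
      calc Real.sinh (x₀ - d) ^ (N - 1)
          ≤ Real.exp (d^2 - Real.sqrt 2 * d) ^ (N - 1) := pow_le_pow_left₀ hs0 hsinh_le _
        _ = Real.exp (((N - 1 : ℕ):ℝ) * (d^2 - Real.sqrt 2 * d)) :=
            (Real.exp_nat_mul _ _).symm
        _ = Real.exp (((N:ℝ) - 1) * (d^2 - Real.sqrt 2 * d)) := by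
            rw [Nat.cast_sub hNnat1, Nat.cast_one]
    constructor
    · have := Real.cosh_pos (x := x₀ - d)
      positivity
    · have hE : L + ((N:ℝ) - 1) * (d^2 - Real.sqrt 2 * d)
          ≤ 12 - Real.sqrt 2 * ((N:ℝ) * ε N) := by
        have hexp : Real.sqrt 2 * d = L / N + Real.sqrt 2 * ε N := by
          rw [hddef]
          rw [show Real.sqrt 2 * (Real.sqrt 2 / 2 * L / (N:ℝ) + ε N)
              = (Real.sqrt 2 * Real.sqrt 2) * (L / (N:ℝ)) / 2 + Real.sqrt 2 * ε N from by ring,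
            hs2]
          ring
        have hLfrac : L - ((N:ℝ) - 1) * (L / N) = L / N := by
          field_simp
          ring
        have hd2 : ((N:ℝ) - 1) * d^2 ≤ 9 := by
          have hdd : d * d ≤ (3 / Real.sqrt N) * (3 / Real.sqrt N) :=
            mul_le_mul hdle hdle hd0 (by positivity)
          rw [div_mul_div_comm, hsqsq] at hdd
          have h1 : d^2 ≤ 9 / (N:ℝ) := by rw [sq]; norm_num at hdd ⊢; linarith
          calc ((N:ℝ) - 1) * d^2 ≤ (N:ℝ) * d^2 := by nlinarith [sq_nonneg d]
            _ ≤ (N:ℝ) * (9 / (N:ℝ)) := mul_le_mul_of_nonneg_left h1 hN0.le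
            _ = 9 := by field_simp
        have hεone : ε N ≤ 1 := by
          have : (1:ℝ) / Real.sqrt N ≤ 1 := by
            rw [div_le_one hsqNpos]; linarith
          linarith
        have hLN1 : L / N ≤ 1 := (div_le_one hN0).2 hLselfN
        have hmul : Real.sqrt 2 * ((N:ℝ) * ε N) - Real.sqrt 2
            ≤ Real.sqrt 2 * (((N:ℝ) - 1) * ε N) := by
          nlinarith [mul_nonneg hs2pos.le (by linarith : (0:ℝ) ≤ 1 - ε N)]
        have hh : ((N:ℝ) - 1) * (Real.sqrt 2 * d)
            = ((N:ℝ) - 1) * (L / N) + Real.sqrt 2 * (((N:ℝ) - 1) * ε N) := by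
          rw [hexp]; ring
        have e1 : L + ((N:ℝ) - 1) * (d^2 - Real.sqrt 2 * d)
            = L - ((N:ℝ) - 1) * (Real.sqrt 2 * d) + ((N:ℝ) - 1) * d^2 := by ring
        rw [e1, hh]
        linarith
      calc (N:ℝ) * Real.sinh (x₀ - d) ^ (N - 1) * Real.cosh (x₀ - d)
          ≤ (N:ℝ) * Real.exp (((N:ℝ) - 1) * (d^2 - Real.sqrt 2 * d)) * Real.sqrt 2 := by
            have h1 : (N:ℝ) * Real.sinh (x₀ - d) ^ (N - 1)
                ≤ (N:ℝ) * Real.exp (((N:ℝ) - 1) * (d^2 - Real.sqrt 2 * d)) :=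
              mul_le_mul_of_nonneg_left hpow hN0.le
            exact mul_le_mul h1 hcosh_le (Real.cosh_pos _).le (by positivity)
        _ = Real.sqrt 2 * Real.exp (L + ((N:ℝ) - 1) * (d^2 - Real.sqrt 2 * d)) := by
            rw [show (N:ℝ) = Real.exp L from by rw [hLdef]; exact (Real.exp_log hN0).symm, ← Real.exp_add]
            ring_nf
        _ ≤ Real.sqrt 2 * Real.exp (12 - Real.sqrt 2 * ((N:ℝ) * ε N)) :=
            mul_le_mul_of_nonneg_left (Real.exp_le_exp.2 hE) hs2pos.le
  have hg : Tendsto (fun N : ℕ => Real.sqrt 2 * Real.exp (12 - Real.sqrt 2 * ((N:ℝ) * ε N)))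
      atTop (nhds 0) := by
    have h1 : Tendsto (fun N : ℕ => Real.sqrt 2 * ((N:ℝ) * ε N)) atTop atTop :=
      hεinf.const_mul_atTop hs2pos
    have h2 : Tendsto (fun N : ℕ => 12 - Real.sqrt 2 * ((N:ℝ) * ε N)) atTop atBot := by
      have := tendsto_atBot_add_const_left atTop (12:ℝ) (tendsto_neg_atTop_atBot.comp h1)
      simpa [Function.comp, sub_eq_add_neg] using this
    have h3 := Real.tendsto_exp_atBot.comp h2
    have h4 := h3.const_mul (Real.sqrt 2)
    simpa [Function.comp] using h4
  exact squeeze_zero' (key.mono fun N h => h.1) (key.mono fun N h => h.2) hg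
end

section
/- Let c > 0 and t ∈ (0, 1/2] with c t < 0.8, and let a > 0, α' > 0. Define h(t) = t ln sinh(ct) + (a − t) ln cosh(ct). Then h''(t) ≥ (c/((sinh ct)²(cosh ct)²)) (sinh(2ct) − ct cosh(2ct)) > 0; in particular h is strictly convex on {t ∈ (0, 1/2] : ct < 0.8}. -/
open Real Set

noncomputable def hfun (c a : ℝ) : ℝ → ℝ := fun u =>
  u * Real.log (Real.sinh (c * u)) + (a - u) * Real.log (Real.cosh (c * u))

noncomputable def gfun (c a : ℝ) : ℝ → ℝ := fun u =>
  Real.log (Real.sinh (c * u)) - Real.log (Real.cosh (c * u))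
    + c * u * Real.cosh (c * u) / Real.sinh (c * u)
    + c * (a - u) * Real.sinh (c * u) / Real.cosh (c * u)

lemma hasDerivAt_hfun (c a x : ℝ) (hc : 0 < c) (hx : 0 < x) :
    HasDerivAt (hfun c a) (gfun c a x) x := by
  have hs : 0 < Real.sinh (c * x) := Real.sinh_pos_iff.2 (by positivity)
  have hcsh : 0 < Real.cosh (c * x) := Real.cosh_pos _
  have hcx : HasDerivAt (fun u : ℝ => c * u) c x := by
    simpa using (hasDerivAt_id x).const_mul c
  have hsinh : HasDerivAt (fun u : ℝ => Real.sinh (c * u)) (Real.cosh (c * x) * c) x :=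
    hcx.sinh
  have hcosh : HasDerivAt (fun u : ℝ => Real.cosh (c * u)) (Real.sinh (c * x) * c) x :=
    hcx.cosh
  have hls : HasDerivAt (fun u : ℝ => Real.log (Real.sinh (c * u)))
      (Real.cosh (c * x) * c / Real.sinh (c * x)) x := hsinh.log hs.ne'
  have hlc : HasDerivAt (fun u : ℝ => Real.log (Real.cosh (c * u)))
      (Real.sinh (c * x) * c / Real.cosh (c * x)) x := hcosh.log hcsh.ne'
  have h1 := (hasDerivAt_id x).mul hls
  have h2 := ((hasDerivAt_const x a).sub (hasDerivAt_id x)).mul hlc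
  have := h1.add h2
  refine this.congr_deriv ?_
  unfold gfun
  field_simp
  simp only [id_eq, Pi.sub_apply]
  ring

lemma hasDerivAt_gfun (c a x : ℝ) (hc : 0 < c) (hx : 0 < x) :
    HasDerivAt (gfun c a)
      (2 * c * (Real.cosh (c * x) / Real.sinh (c * x))
        - 2 * c * (Real.sinh (c * x) / Real.cosh (c * x))
        - c ^ 2 * x / Real.sinh (c * x) ^ 2
        + c ^ 2 * (a - x) / Real.cosh (c * x) ^ 2) x := by
  have hs : 0 < Real.sinh (c * x) := Real.sinh_pos_iff.2 (by positivity)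
  have hcsh : 0 < Real.cosh (c * x) := Real.cosh_pos _
  have hid : Real.cosh (c * x) ^ 2 - Real.sinh (c * x) ^ 2 = 1 := Real.cosh_sq_sub_sinh_sq _
  have hcx : HasDerivAt (fun u : ℝ => c * u) c x := by
    simpa using (hasDerivAt_id x).const_mul c
  have hsinh : HasDerivAt (fun u : ℝ => Real.sinh (c * u)) (Real.cosh (c * x) * c) x :=
    hcx.sinh
  have hcosh : HasDerivAt (fun u : ℝ => Real.cosh (c * u)) (Real.sinh (c * x) * c) x :=
    hcx.cosh
  have hls : HasDerivAt (fun u : ℝ => Real.log (Real.sinh (c * u)))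
      (Real.cosh (c * x) * c / Real.sinh (c * x)) x := hsinh.log hs.ne'
  have hlc : HasDerivAt (fun u : ℝ => Real.log (Real.cosh (c * u)))
      (Real.sinh (c * x) * c / Real.cosh (c * x)) x := hcosh.log hcsh.ne'
  have hnum1 : HasDerivAt (fun u : ℝ => c * u * Real.cosh (c * u))
      (c * Real.cosh (c * x) + c * x * (Real.sinh (c * x) * c)) x := hcx.mul hcosh
  have hq1 := hnum1.div hsinh hs.ne'
  have hnum2 : HasDerivAt (fun u : ℝ => c * (a - u) * Real.sinh (c * u))
      ((c * (0 - 1)) * Real.sinh (c * x) + c * (a - x) * (Real.cosh (c * x) * c)) x := by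
    exact (((hasDerivAt_const x a).sub (hasDerivAt_id x)).const_mul c).mul hsinh
  have hq2 := hnum2.div hcosh hcsh.ne'
  have e1 : (c * Real.cosh (c * x) + c * x * (Real.sinh (c * x) * c)) * Real.sinh (c * x)
      - c * x * Real.cosh (c * x) * (Real.cosh (c * x) * c)
      = c * Real.cosh (c * x) * Real.sinh (c * x) - c ^ 2 * x := by
    linear_combination (-(c ^ 2 * x)) * hid
  have e2 : (c * (0 - 1) * Real.sinh (c * x) + c * (a - x) * (Real.cosh (c * x) * c))
        * Real.cosh (c * x)
      - c * (a - x) * Real.sinh (c * x) * (Real.sinh (c * x) * c)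
      = -(c * Real.sinh (c * x) * Real.cosh (c * x)) + c ^ 2 * (a - x) := by
    linear_combination (c ^ 2 * (a - x)) * hid
  have := ((hls.sub hlc).add hq1).add hq2
  rw [e1] at this
  rw [e2] at this
  refine this.congr_deriv ?_
  field_simp
  ring

lemma pos_factor (u : ℝ) (hu : 0 < u) (hu8 : u < 0.8) :
    0 < Real.sinh (2 * u) - u * Real.cosh (2 * u) := by
  set F := Real.exp u with hF
  have hF0 : (0 : ℝ) < F := Real.exp_pos u
  have hF1 : (1 : ℝ) + u ≤ F := by have := Real.add_one_le_exp u; linarith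
  have h2 : Real.exp (2 * u) = F ^ 2 := by rw [two_mul, Real.exp_add]; ring
  have hm : Real.exp (-(2 * u)) = 1 / F ^ 2 := by rw [Real.exp_neg, h2, one_div]
  have hmain : (Real.sinh (2 * u) - u * Real.cosh (2 * u)) * (2 * F ^ 2)
      = F ^ 4 * (1 - u) - (1 + u) := by
    rw [Real.sinh_eq, Real.cosh_eq, hm, h2]
    field_simp
    ring
  have h4 : (1 + u) ^ 4 ≤ F ^ 4 := by
    have := pow_le_pow_left₀ (by linarith : (0:ℝ) ≤ 1 + u) hF1 4
    linarith
  have hR : 0 < F ^ 4 * (1 - u) - (1 + u) := by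
    have h1u : (0:ℝ) < 1 - u := by norm_num at hu8 ⊢; linarith
    have step : (1 + u) ^ 4 * (1 - u) ≤ F ^ 4 * (1 - u) :=
      mul_le_mul_of_nonneg_right h4 h1u.le
    have p1 : u * u < 0.8 * u := by nlinarith
    have p2 : u * u * u < 0.8 * (u * u) := by nlinarith
    have hq : 0 < 2 - 2 * u ^ 2 - u ^ 3 := by nlinarith
    have poly : 0 < (1 + u) ^ 4 * (1 - u) - (1 + u) := by
      have eq : (1 + u) ^ 4 * (1 - u) - (1 + u) = (1 + u) * u * (2 - 2 * u ^ 2 - u ^ 3) := by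
        ring
      rw [eq]
      have : 0 < (1 + u) * u := by positivity
      exact mul_pos this hq
    linarith
  nlinarith [hmain, sq_nonneg F, hF0]

lemma deriv2_eq (c a t : ℝ) (hc : 0 < c) (ht0 : 0 < t) :
    deriv (deriv (hfun c a)) t
      = 2 * c * (Real.cosh (c * t) / Real.sinh (c * t))
        - 2 * c * (Real.sinh (c * t) / Real.cosh (c * t))
        - c ^ 2 * t / Real.sinh (c * t) ^ 2
        + c ^ 2 * (a - t) / Real.cosh (c * t) ^ 2 := by
  have hev : deriv (hfun c a) =ᶠ[nhds t] gfun c a := by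
    filter_upwards [Ioi_mem_nhds ht0] with x hx
    exact (hasDerivAt_hfun c a x hc hx).deriv
  rw [hev.deriv_eq]
  exact (hasDerivAt_gfun c a t hc ht0).deriv

lemma G_bound (c a t : ℝ) (hc : 0 < c) (ha : 0 < a) (ht0 : 0 < t) :
    (c / ((Real.sinh (c * t)) ^ 2 * (Real.cosh (c * t)) ^ 2))
        * (Real.sinh (2 * c * t) - c * t * Real.cosh (2 * c * t))
      ≤ 2 * c * (Real.cosh (c * t) / Real.sinh (c * t))
        - 2 * c * (Real.sinh (c * t) / Real.cosh (c * t))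
        - c ^ 2 * t / Real.sinh (c * t) ^ 2
        + c ^ 2 * (a - t) / Real.cosh (c * t) ^ 2 := by
  have hs : 0 < Real.sinh (c * t) := Real.sinh_pos_iff.2 (by positivity)
  have hcsh : 0 < Real.cosh (c * t) := Real.cosh_pos _
  have hid : Real.cosh (c * t) ^ 2 - Real.sinh (c * t) ^ 2 = 1 := Real.cosh_sq_sub_sinh_sq _
  have h2s : Real.sinh (2 * c * t) = 2 * Real.sinh (c * t) * Real.cosh (c * t) := by
    rw [show 2 * c * t = 2 * (c * t) by ring, Real.sinh_two_mul]
  have h2c : Real.cosh (2 * c * t) = 2 * Real.cosh (c * t) ^ 2 - 1 := by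
    rw [show 2 * c * t = 2 * (c * t) by ring, Real.cosh_two_mul]
    linarith [hid]
  rw [h2s, h2c, div_mul_eq_mul_div, div_le_iff₀ (by positivity)]
  have hG : 2 * c * (Real.cosh (c * t) / Real.sinh (c * t))
        - 2 * c * (Real.sinh (c * t) / Real.cosh (c * t))
        - c ^ 2 * t / Real.sinh (c * t) ^ 2
        + c ^ 2 * (a - t) / Real.cosh (c * t) ^ 2
      = (2 * c * Real.cosh (c * t) ^ 3 * Real.sinh (c * t)
          - 2 * c * Real.sinh (c * t) ^ 3 * Real.cosh (c * t)
          - c ^ 2 * t * Real.cosh (c * t) ^ 2 + c ^ 2 * (a - t) * Real.sinh (c * t) ^ 2)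
        / (Real.sinh (c * t) ^ 2 * Real.cosh (c * t) ^ 2) := by
    field_simp
  have hN : 2 * c * Real.cosh (c * t) ^ 3 * Real.sinh (c * t)
          - 2 * c * Real.sinh (c * t) ^ 3 * Real.cosh (c * t)
          - c ^ 2 * t * Real.cosh (c * t) ^ 2 + c ^ 2 * (a - t) * Real.sinh (c * t) ^ 2
      = c * (2 * Real.sinh (c * t) * Real.cosh (c * t)
          - c * t * (2 * Real.cosh (c * t) ^ 2 - 1)) + c ^ 2 * a * Real.sinh (c * t) ^ 2 := by
    linear_combination (2 * c * Real.cosh (c * t) * Real.sinh (c * t) + c ^ 2 * t) * hid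
  rw [hG, div_mul_cancel₀ _ (by positivity), hN]
  nlinarith [mul_pos (mul_pos (mul_pos hc hc) ha) (mul_pos hs hs)]

/-- Convexity of `h(t) = t ln sinh(ct) + (a−t) ln cosh(ct)`: for `c > 0`, `a > 0`,
`α' > 0`, and `t ∈ (0,1/2]` with `ct < 0.8`, the second derivative satisfies
`h''(t) ≥ (c/((sinh ct)²(cosh ct)²))(sinh(2ct) − ct cosh(2ct)) > 0`; in particular `h`
is strictly convex on `{t ∈ (0,1/2] : ct < 0.8}`. -/
theorem stmt15 (c a α' t : ℝ) (hc : 0 < c) (ha : 0 < a) (hα' : 0 < α')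
    (ht0 : 0 < t) (ht : t ≤ 1 / 2) (hct : c * t < 0.8) :
    ((c / ((Real.sinh (c * t)) ^ 2 * (Real.cosh (c * t)) ^ 2))
        * (Real.sinh (2 * c * t) - c * t * Real.cosh (2 * c * t))
      ≤ deriv (deriv (fun u : ℝ =>
          u * Real.log (Real.sinh (c * u)) + (a - u) * Real.log (Real.cosh (c * u)))) t
      ∧ 0 < (c / ((Real.sinh (c * t)) ^ 2 * (Real.cosh (c * t)) ^ 2))
        * (Real.sinh (2 * c * t) - c * t * Real.cosh (2 * c * t))) ∧
    StrictConvexOn ℝ {u : ℝ | 0 < u ∧ u ≤ 1 / 2 ∧ c * u < 0.8}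
      (fun u : ℝ =>
        u * Real.log (Real.sinh (c * u)) + (a - u) * Real.log (Real.cosh (c * u))) := by
  have hfeq : (fun u : ℝ => u * Real.log (Real.sinh (c * u))
      + (a - u) * Real.log (Real.cosh (c * u))) = hfun c a := rfl
  have hposfun : ∀ x : ℝ, 0 < x → c * x < 0.8 →
      0 < (c / ((Real.sinh (c * x)) ^ 2 * (Real.cosh (c * x)) ^ 2))
        * (Real.sinh (2 * c * x) - c * x * Real.cosh (2 * c * x)) := by
    intro x hx0 hx8
    have hs : 0 < Real.sinh (c * x) := Real.sinh_pos_iff.2 (by positivity)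
    have h1 : 0 < c / ((Real.sinh (c * x)) ^ 2 * (Real.cosh (c * x)) ^ 2) := by
      have := Real.cosh_pos (c * x)
      positivity
    have h2 : 0 < Real.sinh (2 * c * x) - c * x * Real.cosh (2 * c * x) := by
      have := pos_factor (c * x) (by positivity) hx8
      rw [show 2 * (c * x) = 2 * c * x by ring] at this
      exact this
    exact mul_pos h1 h2
  refine ⟨⟨?_, hposfun t ht0 hct⟩, ?_⟩
  · rw [hfeq, deriv2_eq c a t hc ht0]
    exact G_bound c a t hc ha ht0
  · rw [hfeq]
    have hDeq : {u : ℝ | 0 < u ∧ u ≤ 1 / 2 ∧ c * u < 0.8}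
        = Ioc (0:ℝ) (1/2) ∩ Iio (0.8 / c) := by
      ext u
      simp only [mem_setOf_eq, mem_inter_iff, mem_Ioc, mem_Iio, lt_div_iff₀ hc, and_assoc,
        mul_comm]
    apply strictConvexOn_of_deriv2_pos'
    · rw [hDeq]
      exact (convex_Ioc _ _).inter (convex_Iio _)
    · intro x hx
      exact ((hasDerivAt_hfun c a x hc hx.1).continuousAt).continuousWithinAt
    · intro x hx
      obtain ⟨hx0, hx12, hx8⟩ := hx
      have hit : deriv^[2] (hfun c a) x = deriv (deriv (hfun c a)) x := rfl
      rw [hit, deriv2_eq c a x hc hx0]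
      have hbd := G_bound c a x hc ha hx0
      have hpos := hposfun x hx0 hx8
      linarith
end
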